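/- Let n ≥ 1, 0 < β ≤ 1, and 0 < α₁ ≤ α₂. Let Φ: ℝⁿ → ℝⁿ be continuously differentiable and let M be a continuous map from ℝⁿ to the n×n real symmetric matrices such that α₁‖v‖² ≤ vᵀ M(x) v ≤ α₂‖v‖² for all x, v ∈ ℝⁿ, and such that DΦ(x)ᵀ M(Φ(x)) DΦ(x) ⪯ (1−β) M(x) for every x ∈ ℝⁿ, where DΦ(x) is the Jacobian of Φ at x. Then for all x, y ∈ ℝⁿ and all k ∈ ℕ, ‖Φ^{[k]}(x) − Φ^{[k]}(y)‖ ≤ √(α₂/α₁) · (1−β)^{k/2} · ‖x − y‖, where Φ^{[k]} denotes the k-fold iterate of Φ. -/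

import Mathlib

open Matrix

/-- The Euclidean norm of a vector in `ℝⁿ`. -/
noncomputable def euclNorm {n : ℕ} (v : Fin n → ℝ) : ℝ :=
  Real.sqrt (v ⬝ᵥ v)

namespace ContractionAux

variable {n : ℕ}

lemma dp_self_nonneg (v : Fin n → ℝ) : 0 ≤ v ⬝ᵥ v :=
  Finset.sum_nonneg fun _ _ => mul_self_nonneg _

lemma euclNorm_nonneg (v : Fin n → ℝ) : 0 ≤ euclNorm v := Real.sqrt_nonneg _

lemma euclNorm_sq (v : Fin n → ℝ) : euclNorm v ^ 2 = v ⬝ᵥ v :=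
  Real.sq_sqrt (dp_self_nonneg v)

/-- The product of Jacobians along the orbit: `iterJac Φ J k z` is the Jacobian of `Φ^[k]`
at `z` by the chain rule. -/
def iterJac (Φ : (Fin n → ℝ) → Fin n → ℝ)
    (J : (Fin n → ℝ) → Matrix (Fin n) (Fin n) ℝ) :
    ℕ → (Fin n → ℝ) → Matrix (Fin n) (Fin n) ℝ
  | 0, _ => 1
  | k + 1, z => J (Φ^[k] z) * iterJac Φ J k z

lemma hasFDerivAt_iter (Φ : (Fin n → ℝ) → Fin n → ℝ)
    (J : (Fin n → ℝ) → Matrix (Fin n) (Fin n) ℝ)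
    (hJ : ∀ x, HasFDerivAt Φ (J x).mulVecLin.toContinuousLinearMap x) (k : ℕ)
    (z : Fin n → ℝ) :
    HasFDerivAt Φ^[k] (iterJac Φ J k z).mulVecLin.toContinuousLinearMap z := by
  induction k generalizing z with
  | zero =>
    have h : (iterJac Φ J 0 z).mulVecLin.toContinuousLinearMap
        = ContinuousLinearMap.id ℝ (Fin n → ℝ) := by
      ext v
      simp [iterJac]
    rw [Function.iterate_zero, h]
    exact hasFDerivAt_id z
  | succ k ih =>
    rw [Function.iterate_succ']
    have h := (hJ (Φ^[k] z)).comp z (ih z)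
    have he : ((J (Φ^[k] z)).mulVecLin.toContinuousLinearMap).comp
          (iterJac Φ J k z).mulVecLin.toContinuousLinearMap
        = (iterJac Φ J (k+1) z).mulVecLin.toContinuousLinearMap := by
      ext v
      simp [iterJac, Matrix.mulVec_mulVec]
    rwa [he] at h

lemma step_bound (β : ℝ)
    (Φ : (Fin n → ℝ) → Fin n → ℝ)
    (J M : (Fin n → ℝ) → Matrix (Fin n) (Fin n) ℝ)
    (hcontr : ∀ x, ((1 - β) • M x - (J x)ᵀ * M (Φ x) * J x).PosSemidef)
    (x : Fin n → ℝ) (w : Fin n → ℝ) :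
    (J x *ᵥ w) ⬝ᵥ (M (Φ x)) *ᵥ (J x *ᵥ w) ≤ (1 - β) * (w ⬝ᵥ M x *ᵥ w) := by
  have h := (hcontr x).dotProduct_mulVec_nonneg w
  simp only [star_trivial, sub_mulVec, dotProduct_sub, smul_mulVec,
    dotProduct_smul, smul_eq_mul] at h
  have hrw : w ⬝ᵥ ((J x)ᵀ * M (Φ x) * J x) *ᵥ w
      = (J x *ᵥ w) ⬝ᵥ (M (Φ x)) *ᵥ (J x *ᵥ w) := by
    rw [← Matrix.mulVec_mulVec, ← Matrix.mulVec_mulVec, Matrix.dotProduct_mulVec,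
      Matrix.vecMul_transpose]
  linarith [hrw ▸ h]

lemma iter_quad_bound (β : ℝ) (hb : 0 ≤ 1 - β)
    (Φ : (Fin n → ℝ) → Fin n → ℝ)
    (J M : (Fin n → ℝ) → Matrix (Fin n) (Fin n) ℝ)
    (hcontr : ∀ x, ((1 - β) • M x - (J x)ᵀ * M (Φ x) * J x).PosSemidef)
    (k : ℕ) (z v : Fin n → ℝ) :
    (iterJac Φ J k z *ᵥ v) ⬝ᵥ (M (Φ^[k] z)) *ᵥ (iterJac Φ J k z *ᵥ v)
      ≤ (1 - β) ^ k * (v ⬝ᵥ M z *ᵥ v) := by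
  induction k with
  | zero => simp [iterJac]
  | succ k ih =>
    have h1 := step_bound β Φ J M hcontr (Φ^[k] z) (iterJac Φ J k z *ᵥ v)
    have h2 : iterJac Φ J (k + 1) z *ᵥ v
        = J (Φ^[k] z) *ᵥ (iterJac Φ J k z *ᵥ v) := by
      simp [iterJac, Matrix.mulVec_mulVec]
    rw [h2, Function.iterate_succ_apply']
    calc (J (Φ^[k] z) *ᵥ (iterJac Φ J k z *ᵥ v)) ⬝ᵥ
          (M (Φ (Φ^[k] z))) *ᵥ (J (Φ^[k] z) *ᵥ (iterJac Φ J k z *ᵥ v))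
        ≤ (1 - β) * ((iterJac Φ J k z *ᵥ v) ⬝ᵥ (M (Φ^[k] z)) *ᵥ (iterJac Φ J k z *ᵥ v)) := h1
      _ ≤ (1 - β) * ((1 - β) ^ k * (v ⬝ᵥ M z *ᵥ v)) := by
          exact mul_le_mul_of_nonneg_left ih hb
      _ = (1 - β) ^ (k + 1) * (v ⬝ᵥ M z *ᵥ v) := by ring

noncomputable def e (n : ℕ) : EuclideanSpace ℝ (Fin n) ≃L[ℝ] (Fin n → ℝ) :=
  EuclideanSpace.equiv (Fin n) ℝ

lemma norm_symm (w : Fin n → ℝ) : ‖(e n).symm w‖ = euclNorm w := by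
  rw [EuclideanSpace.norm_eq]
  unfold euclNorm dotProduct
  congr 1
  refine Finset.sum_congr rfl fun i _ => ?_
  simp [e, Real.norm_eq_abs, sq_abs, sq]

lemma lipschitz_of_deriv_bound (C : ℝ) (hC : 0 ≤ C) (f : (Fin n → ℝ) → (Fin n → ℝ))
    (L : (Fin n → ℝ) → ((Fin n → ℝ) →L[ℝ] (Fin n → ℝ)))
    (hf : ∀ z, HasFDerivAt f (L z) z)
    (hb : ∀ z v, euclNorm (L z v) ≤ C * euclNorm v)
    (x y : Fin n → ℝ) : euclNorm (f x - f y) ≤ C * euclNorm (x - y) := by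
  set F : EuclideanSpace ℝ (Fin n) → EuclideanSpace ℝ (Fin n) :=
    fun z => (e n).symm (f (e n z)) with hF
  set L' : EuclideanSpace ℝ (Fin n) → (EuclideanSpace ℝ (Fin n) →L[ℝ] EuclideanSpace ℝ (Fin n)) :=
    fun z => ((e n).symm.toContinuousLinearMap.comp (L (e n z))).comp (e n).toContinuousLinearMap
  have hF' : ∀ z : EuclideanSpace ℝ (Fin n), HasFDerivAt F (L' z) z := fun z =>
    ((e n).symm.toContinuousLinearMap.hasFDerivAt.comp _
      ((hf (e n z)).comp z (e n).toContinuousLinearMap.hasFDerivAt))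
  have hbound : ∀ z : EuclideanSpace ℝ (Fin n), ‖L' z‖ ≤ C := by
    intro z
    refine ContinuousLinearMap.opNorm_le_bound _ hC fun u => ?_
    have h : ‖L' z u‖ = euclNorm (L (e n z) (e n u)) := by
      exact norm_symm (L (e n z) (e n u))
    rw [h]
    calc euclNorm (L (e n z) (e n u)) ≤ C * euclNorm (e n u) := hb _ _
      _ = C * ‖u‖ := by rw [← norm_symm (e n u)]; simp
  have key := convex_univ.norm_image_sub_le_of_norm_hasFDerivWithin_le
    (f := F) (f' := L') (fun z _ => (hF' z).hasFDerivWithinAt) (fun z _ => hbound z)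
    (Set.mem_univ ((e n).symm y)) (Set.mem_univ ((e n).symm x))
  have h1 : F ((e n).symm x) - F ((e n).symm y) = (e n).symm (f x - f y) := by
    simp [hF, map_sub]
  have h2 : (e n).symm x - (e n).symm y = (e n).symm (x - y) := by simp [map_sub]
  rw [h1, h2, norm_symm, norm_symm] at key
  exact key

end ContractionAux

/-- Theorem 1 in full: if the C¹ closed-loop map `Φ` with Jacobian
`J(x) = DΦ(x)` admits a continuous uniformly bounded symmetric metric `M`
(`α₁‖v‖² ≤ vᵀ M(x) v ≤ α₂‖v‖²`) satisfying the contraction condition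
`DΦ(x)ᵀ M(Φ(x)) DΦ(x) ⪯ (1-β) M(x)` (`P ⪯ Q` meaning `Q - P` positive semidefinite),
then the iterates satisfy incremental exponential stability
`‖Φ^[k](x) - Φ^[k](y)‖ ≤ √(α₂/α₁) (1-β)^{k/2} ‖x - y‖`. -/
theorem contraction_implies_incremental_exponential_stability
    (n : ℕ) (hn : 1 ≤ n) (β α₁ α₂ : ℝ)
    (hβ0 : 0 < β) (hβ1 : β ≤ 1) (hα₁ : 0 < α₁) (hα₁₂ : α₁ ≤ α₂)
    (Φ : (Fin n → ℝ) → Fin n → ℝ) (hΦ : ContDiff ℝ 1 Φ)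
    (J : (Fin n → ℝ) → Matrix (Fin n) (Fin n) ℝ)
    (hJ : ∀ x, HasFDerivAt Φ (J x).mulVecLin.toContinuousLinearMap x)
    (M : (Fin n → ℝ) → Matrix (Fin n) (Fin n) ℝ)
    (hMcont : Continuous M) (hMsym : ∀ x, (M x).IsHermitian)
    (hMlb : ∀ x (v : Fin n → ℝ), α₁ * (euclNorm v) ^ 2 ≤ v ⬝ᵥ (M x).mulVec v)
    (hMub : ∀ x (v : Fin n → ℝ), v ⬝ᵥ (M x).mulVec v ≤ α₂ * (euclNorm v) ^ 2)
    (hcontr : ∀ x, ((1 - β) • M x - (J x)ᵀ * M (Φ x) * J x).PosSemidef) :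
    ∀ (x y : Fin n → ℝ) (k : ℕ),
      euclNorm (Φ^[k] x - Φ^[k] y) ≤
        Real.sqrt (α₂ / α₁) * (1 - β) ^ ((k : ℝ) / 2) * euclNorm (x - y) := by
  intro x y k
  have hb : 0 ≤ 1 - β := by linarith
  have hbk : 0 ≤ (1 - β) ^ k := pow_nonneg hb k
  have hA : 0 ≤ α₂ / α₁ := div_nonneg (by linarith) hα₁.le
  set C : ℝ := Real.sqrt (α₂ / α₁ * (1 - β) ^ k) with hCdef
  have hC : 0 ≤ C := Real.sqrt_nonneg _
  -- the constant matches the one in the statement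
  have hCeq : C = Real.sqrt (α₂ / α₁) * (1 - β) ^ ((k : ℝ) / 2) := by
    rw [hCdef, Real.sqrt_mul hA]
    congr 1
    rw [Real.sqrt_eq_rpow, ← Real.rpow_natCast (1 - β) k, ← Real.rpow_mul hb]
    rw [mul_one_div]
  -- pointwise bound on the chain-rule Jacobian
  have key : ∀ z v, euclNorm (ContractionAux.iterJac Φ J k z *ᵥ v) ≤ C * euclNorm v := by
    intro z v
    set w := ContractionAux.iterJac Φ J k z *ᵥ v with hw
    have h1 := hMlb (Φ^[k] z) w
    have h2 := ContractionAux.iter_quad_bound β hb Φ J M hcontr k z v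
    have h3 := hMub z v
    have h3' := mul_le_mul_of_nonneg_left h3 hbk
    have hsq : euclNorm w ^ 2 ≤ α₂ / α₁ * (1 - β) ^ k * euclNorm v ^ 2 := by
      rw [div_mul_eq_mul_div, div_mul_eq_mul_div, le_div_iff₀ hα₁]
      nlinarith [h1, h2, h3']
    calc euclNorm w = Real.sqrt (euclNorm w ^ 2) :=
          (Real.sqrt_sq (ContractionAux.euclNorm_nonneg w)).symm
      _ ≤ Real.sqrt (α₂ / α₁ * (1 - β) ^ k * euclNorm v ^ 2) := Real.sqrt_le_sqrt hsq
      _ = C * euclNorm v := by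
          rw [Real.sqrt_mul (mul_nonneg hA hbk), Real.sqrt_sq (ContractionAux.euclNorm_nonneg v),
            hCdef]
  have main := ContractionAux.lipschitz_of_deriv_bound C hC (Φ^[k])
    (fun z => (ContractionAux.iterJac Φ J k z).mulVecLin.toContinuousLinearMap)
    (fun z => ContractionAux.hasFDerivAt_iter Φ J hJ k z)
    (fun z v => by simpa using key z v) x y
  rw [hCeq] at main
  exact main
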